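/- Let ρ and σ be d×d complex positive semidefinite matrices with Tr ρ = Tr σ = 1. Then Tr(√ρ · √σ) ≥ Tr(ρ·σ), where √ denotes the positive semidefinite square root of a positive semidefinite matrix. -/

import Mathlib

open Matrix ComplexOrder

/-- The positive semidefinite square root, as defined in the older Mathlib
(`Matrix.PosSemidef.sqrt`, removed since). -/
noncomputable def Matrix.PosSemidef.sqrt {n 𝕜 : Type*} [Fintype n] [DecidableEq n] [RCLike 𝕜]
    {A : Matrix n n 𝕜} (hA : A.PosSemidef) : Matrix n n 𝕜 :=
  hA.1.eigenvectorUnitary.1 * diagonal ((↑) ∘ (√·) ∘ hA.1.eigenvalues) *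
    (star hA.1.eigenvectorUnitary : Matrix n n 𝕜)

lemma Matrix.PosSemidef.sqrt_mul_self {n : ℕ} {A : Matrix (Fin n) (Fin n) ℂ} (hA : A.PosSemidef) :
    hA.sqrt * hA.sqrt = A := by
  have hU : (star hA.1.eigenvectorUnitary : Matrix (Fin n) (Fin n) ℂ) *
      (hA.1.eigenvectorUnitary : Matrix (Fin n) (Fin n) ℂ) = 1 :=
    Unitary.coe_star_mul_self hA.1.eigenvectorUnitary
  conv_rhs => rw [hA.1.spectral_theorem, Unitary.conjStarAlgAut_apply]
  simp only [Matrix.PosSemidef.sqrt, mul_assoc]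
  rw [← mul_assoc (star _ : Matrix (Fin n) (Fin n) ℂ) _ (diagonal _ * _), hU, one_mul,
    ← mul_assoc (diagonal _) (diagonal _), diagonal_mul_diagonal]
  congr 3
  ext i
  simp only [Function.comp_apply]
  rw [← RCLike.ofReal_mul, Real.mul_self_sqrt (hA.eigenvalues_nonneg i)]

lemma Matrix.PosSemidef.posSemidef_sqrt {n : ℕ} {A : Matrix (Fin n) (Fin n) ℂ} (hA : A.PosSemidef) :
    hA.sqrt.PosSemidef := by
  unfold Matrix.PosSemidef.sqrt
  rw [star_eq_conjTranspose]
  apply Matrix.PosSemidef.mul_mul_conjTranspose_same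
  apply Matrix.PosSemidef.diagonal
  intro i
  exact Complex.zero_le_real.mpr (Real.sqrt_nonneg _)

lemma psd_trace_nonneg (n : ℕ) (A : Matrix (Fin n) (Fin n) ℂ) (hA : A.PosSemidef) : 0 ≤ A.trace := by
  rw [Matrix.trace]
  apply Finset.sum_nonneg
  intro i _
  exact hA.diag_nonneg

lemma psd_trace_mul_nonneg (n : ℕ) (A B : Matrix (Fin n) (Fin n) ℂ)
    (hA : A.PosSemidef) (hB : B.PosSemidef) : 0 ≤ (A * B).trace := by
  have h1 : (hA.sqrt * B * hA.sqrt).trace = (A * B).trace := by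
    rw [trace_mul_cycle, hA.sqrt_mul_self]
  rw [← h1]
  apply psd_trace_nonneg
  have := hB.conjTranspose_mul_mul_same hA.sqrt
  rwa [hA.posSemidef_sqrt.1] at this


lemma sqrt_sub_self_posSemidef (n : ℕ) (A : Matrix (Fin n) (Fin n) ℂ)
    (hA : A.PosSemidef) (h1 : A.trace = 1) : (hA.sqrt - A).PosSemidef := by
  have hH := hA.1
  set U := hH.eigenvectorUnitary with hU
  have htr : A.trace = ∑ i, (hH.eigenvalues i : ℂ) := by
    conv_lhs => rw [hH.spectral_theorem, Unitary.conjStarAlgAut_apply]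
    rw [trace_mul_cycle]
    simp [SetLike.coe_mem, trace_diagonal]
  have hsum : ∑ i, hH.eigenvalues i = 1 := by
    have := htr.symm.trans h1
    exact_mod_cast this
  have hle1 : ∀ i, hH.eigenvalues i ≤ 1 := by
    intro i
    calc hH.eigenvalues i ≤ ∑ j, hH.eigenvalues j :=
          Finset.single_le_sum (fun j _ => hA.eigenvalues_nonneg j) (Finset.mem_univ i)
      _ = 1 := hsum
  have hsq : hA.sqrt = (U : Matrix (Fin n) (Fin n) ℂ) *
      diagonal ((↑) ∘ Real.sqrt ∘ hH.eigenvalues) * star (U : Matrix (Fin n) (Fin n) ℂ) := rfl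
  have key : hA.sqrt - A =
      (U : Matrix (Fin n) (Fin n) ℂ) *
        diagonal (fun i => ((Real.sqrt (hH.eigenvalues i) - hH.eigenvalues i : ℝ) : ℂ)) *
        star (U : Matrix (Fin n) (Fin n) ℂ) := by
    have hAeq : A = (U : Matrix (Fin n) (Fin n) ℂ) *
        diagonal ((↑) ∘ hH.eigenvalues) * star (U : Matrix (Fin n) (Fin n) ℂ) :=
      hH.spectral_theorem
    calc hA.sqrt - A
        = (U : Matrix (Fin n) (Fin n) ℂ) * diagonal ((↑) ∘ Real.sqrt ∘ hH.eigenvalues) *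
            star (U : Matrix (Fin n) (Fin n) ℂ) -
          (U : Matrix (Fin n) (Fin n) ℂ) * diagonal ((↑) ∘ hH.eigenvalues) *
            star (U : Matrix (Fin n) (Fin n) ℂ) := by rw [← hsq, ← hAeq]
      _ = _ := by
          rw [← sub_mul, ← mul_sub]
          congr 2
          ext i j
          by_cases h : i = j <;> simp [h, diagonal_apply, Complex.ofReal_sub]
  rw [key, star_eq_conjTranspose]
  apply Matrix.PosSemidef.mul_mul_conjTranspose_same
  apply Matrix.PosSemidef.diagonal
  intro i
  have h0 := hA.eigenvalues_nonneg i
  have hle := hle1 i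
  have hnn : 0 ≤ Real.sqrt (hH.eigenvalues i) - hH.eigenvalues i := by
    have hs := Real.sq_sqrt h0
    have hs0 := Real.sqrt_nonneg (hH.eigenvalues i)
    nlinarith
  exact Complex.zero_le_real.mpr hnn

/-- For density matrices `ρ`, `σ` one has `Tr(√ρ·√σ) ≥ Tr(ρ·σ)`. -/
theorem trace_sqrt_mul_sqrt_ge_trace_mul
    (d : ℕ) (ρ σ : Matrix (Fin d) (Fin d) ℂ)
    (hρ : ρ.PosSemidef) (hσ : σ.PosSemidef)
    (hρ1 : ρ.trace = 1) (hσ1 : σ.trace = 1) :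
    ((ρ * σ).trace).re ≤ ((hρ.sqrt * hσ.sqrt).trace).re := by
  have hρd := sqrt_sub_self_posSemidef d ρ hρ hρ1
  have hσd := sqrt_sub_self_posSemidef d σ hσ hσ1
  have h1 : 0 ≤ ((hρ.sqrt - ρ) * σ).trace := psd_trace_mul_nonneg d _ _ hρd hσ
  have h2 : 0 ≤ (hρ.sqrt * (hσ.sqrt - σ)).trace := by
    rw [trace_mul_comm]
    exact psd_trace_mul_nonneg d _ _ hσd hρ.posSemidef_sqrt
  rw [sub_mul, trace_sub] at h1
  rw [mul_sub, trace_sub] at h2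
  have e1 := (Complex.le_def.mp h1).1
  have e2 := (Complex.le_def.mp h2).1
  simp only [Complex.sub_re, Complex.zero_re] at e1 e2
  linarith
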